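/- arXiv:2605.04783 — 2 statements merged into one kernel-verified Lean document; each statement's English description precedes it below -/
import Mathlib

section
/- Let (P,Q,R) be a k-admissible triple with P on vertex set A and Q on vertex set B, each with e(P) = e(Q) = f(k−1,k−1). Then for n ≥ |A| + |B|, the number of edges of H_n(P,Q,R) equals ⌊n²/4⌋ − |A||B| + e(R) + 2f(k−1,k−1), and the number of triangles in H_n(P,Q,R) equals f(k−1,k−1)(n − |A| − |B|) + N(K_3,P) + N(K_3,Q) + τ_R(P,Q), where τ_R(P,Q) = Σ_{aa'∈E(P)} |N_R(a)∩N_R(a')| + Σ_{bb'∈E(Q)} |N_R(b)∩N_R(b')|. -/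
open SimpleGraph

/-- The matching number of `G` restricted to a vertex subset `S`. -/
noncomputable def nuOn {V : Type*} (G : SimpleGraph V) (S : Set V) : ℕ :=
  sSup {n | ∃ M : G.Subgraph, M.IsMatching ∧ M.verts ⊆ S ∧ M.edgeSet.ncard = n}

/-- The matching number `ν(G)`. -/
noncomputable def nu {V : Type*} (G : SimpleGraph V) : ℕ := nuOn G Set.univ

/-- The friendship graph `F_k`: `k` triangles sharing the common center `none`. -/
def friendshipGraph (k : ℕ) : SimpleGraph (Option (Fin k × Fin 2)) :=
  SimpleGraph.fromRel (fun a b => a = none ∨ b = none ∨ ∃ i, a = some (i, 0) ∧ b = some (i, 1))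

/-- `G` contains no copy of the friendship graph `F_k`. -/
def FkFree (k : ℕ) {V : Type*} (G : SimpleGraph V) : Prop :=
  ∀ f : friendshipGraph k →g G, ¬ Function.Injective ⇑f

/-- The Chvátal–Hanson value `f(k-1,k-1)`. -/
def fCH (k : ℕ) : ℕ := if Odd k then k * (k - 1) else k * (2 * k - 3) / 2

/-- The graph `H_n(P,Q,R)`: internal edges `E(P) ∪ E(Q)`, crossing edges
`((X×Y) \ (A×B)) ∪ E(R)`. -/
def Hconstr {V : Type*} (X Y A B : Set V) (P Q R : SimpleGraph V) : SimpleGraph V :=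
  SimpleGraph.fromRel (fun u v =>
    P.Adj u v ∨ Q.Adj u v ∨ R.Adj u v ∨ (u ∈ X ∧ v ∈ Y ∧ ¬(u ∈ A ∧ v ∈ B)))

open SimpleGraph Finset

section Aux
variable {V : Type*} [DecidableEq V]

/-- The two-element finset of a `Sym2`. -/
def sym2F (e : Sym2 V) : Finset V :=
  Sym2.lift ⟨fun a b => {a, b}, fun a b => Finset.pair_comm a b⟩ e

@[simp] lemma sym2F_mk (a b : V) : sym2F s(a, b) = {a, b} := rfl

lemma mem_sym2F {e : Sym2 V} {x : V} : x ∈ sym2F e ↔ x ∈ e := by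
  induction e using Sym2.ind with
  | _ a b => simp [Sym2.mem_iff]

lemma sym2F_injective : Function.Injective (sym2F (V := V)) := by
  intro e e'
  induction e using Sym2.ind with
  | _ a b =>
    induction e' using Sym2.ind with
    | _ c d =>
      intro h
      simp only [sym2F_mk] at h
      have ha : a ∈ ({c, d} : Finset V) := h ▸ (by simp)
      have hb : b ∈ ({c, d} : Finset V) := h ▸ (by simp)
      have hc : c ∈ ({a, b} : Finset V) := h ▸ (by simp)
      have hd : d ∈ ({a, b} : Finset V) := h ▸ (by simp)
      simp only [Finset.mem_insert, Finset.mem_singleton] at ha hb hc hd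
      rw [Sym2.eq_iff]
      rcases ha with rfl | rfl <;> rcases hb with rfl | rfl <;> tauto

lemma balanced_mul (a b : ℕ) (h1 : a ≤ b + 1) (h2 : b ≤ a + 1) :
    a * b = (a + b) ^ 2 / 4 := by
  rcases Nat.lt_trichotomy a b with h | rfl | h
  · have hb : b = a + 1 := by omega
    subst hb
    have h : (a + (a + 1)) ^ 2 = 4 * (a * (a + 1)) + 1 := by ring
    rw [h]
    generalize a * (a + 1) = m
    omega
  · have h : (a + a) ^ 2 = 4 * (a * a) := by ring
    rw [h]
    generalize a * a = m
    omega
  · have ha : a = b + 1 := by omega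
    subst ha
    have h : (b + 1 + b) ^ 2 = 4 * ((b + 1) * b) + 1 := by ring
    rw [h]
    generalize (b + 1) * b = m
    omega

end Aux

section Cnt
variable {V : Type*} [Fintype V] [DecidableEq V]

lemma pure_count (H P : SimpleGraph V) [DecidableRel H.Adj] [DecidableRel P.Adj]
    (Xf Yf : Finset V)
    (hdisj : ∀ v, v ∈ Xf → v ∈ Yf → False)
    (hcover : ∀ v, v ∈ Xf ∨ v ∈ Yf)
    (hPX : ∀ u v, P.Adj u v → u ∈ Xf ∧ v ∈ Xf)
    (hxx : ∀ u v, u ∈ Xf → v ∈ Xf → (H.Adj u v ↔ P.Adj u v)) :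
    ((H.cliqueFinset 3).filter (fun t => (t ∩ Yf).card = 0)).card
      = (P.cliqueFinset 3).card := by
  congr 1
  ext t
  simp only [mem_filter, mem_cliqueFinset_iff, Finset.card_eq_zero]
  constructor
  · rintro ⟨hcl, hYe⟩
    have htX : ∀ z ∈ t, z ∈ Xf := by
      intro z hz
      rcases hcover z with h | h
      · exact h
      · exact absurd (Finset.mem_inter.mpr ⟨hz, h⟩) (by simp [hYe])
    exact ⟨fun u hu v hv huv => (hxx u v (htX u hu) (htX v hv)).mp (hcl.isClique hu hv huv),
      hcl.card_eq⟩
  · intro hcl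
    have htX : ∀ z ∈ t, z ∈ Xf := by
      rw [is3Clique_iff] at hcl
      obtain ⟨a, b, c, hab, hac, hbc, rfl⟩ := hcl
      intro z hz
      simp only [Finset.mem_insert, Finset.mem_singleton] at hz
      rcases hz with rfl | rfl | rfl
      · exact (hPX _ _ hab).1
      · exact (hPX _ _ hab).2
      · exact (hPX _ _ hac).2
    refine ⟨⟨fun u hu v hv huv => (hxx u v (htX u hu) (htX v hv)).mpr
        (hcl.isClique hu hv huv), hcl.card_eq⟩, ?_⟩
    rw [Finset.eq_empty_iff_forall_notMem]
    intro z hz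
    rw [Finset.mem_inter] at hz
    exact hdisj z (htX z hz.1) hz.2

lemma mixed_count (H P : SimpleGraph V) [DecidableRel H.Adj] [DecidableRel P.Adj]
    (Xf Yf : Finset V)
    (hdisj : ∀ v, v ∈ Xf → v ∈ Yf → False)
    (hcover : ∀ v, v ∈ Xf ∨ v ∈ Yf)
    (hPX : ∀ u v, P.Adj u v → u ∈ Xf ∧ v ∈ Xf)
    (hxx : ∀ u v, u ∈ Xf → v ∈ Xf → (H.Adj u v ↔ P.Adj u v)) :
    ((H.cliqueFinset 3).filter (fun t => (t ∩ Yf).card = 1)).card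
      = ∑ e ∈ P.edgeFinset, (Yf.filter (fun y => ∀ u ∈ e, H.Adj u y)).card := by
  rw [← Finset.card_sigma]
  have hesub : ∀ e ∈ P.edgeFinset, ∀ z ∈ sym2F e, z ∈ Xf := by
    intro e
    induction e using Sym2.ind with
    | _ a b =>
      intro he z hz
      rw [SimpleGraph.mem_edgeFinset, SimpleGraph.mem_edgeSet] at he
      rw [mem_sym2F, Sym2.mem_iff] at hz
      rcases hz with rfl | rfl
      · exact (hPX _ _ he).1
      · exact (hPX _ _ he).2
  refine (Finset.card_nbij (fun p => insert p.2 (sym2F p.1)) ?_ ?_ ?_).symm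
  · -- maps into
    rintro ⟨e, y⟩ hp
    revert hp
    induction e using Sym2.ind with
    | _ a b =>
      intro hp
      simp only [Finset.mem_coe, Finset.mem_sigma, Finset.mem_filter, SimpleGraph.mem_edgeFinset,
        SimpleGraph.mem_edgeSet] at hp
      obtain ⟨hab, hyY, hadj⟩ := hp
      have haX : a ∈ Xf := (hPX _ _ hab).1
      have hbX : b ∈ Xf := (hPX _ _ hab).2
      have hay : H.Adj a y := hadj a (by simp)
      have hby : H.Adj b y := hadj b (by simp)
      have hne : a ≠ b := hab.ne
      have hya : y ≠ a := fun h => hdisj y (h ▸ haX) hyY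
      have hyb : y ≠ b := fun h => hdisj y (h ▸ hbX) hyY
      simp only [Finset.mem_coe, Finset.mem_filter, mem_cliqueFinset_iff, sym2F_mk]
      constructor
      · rw [is3Clique_iff]
        exact ⟨a, b, y, (hxx a b haX hbX).mpr hab, hay, hby, by
          ext z; simp; tauto⟩
      · have : insert y ({a, b} : Finset V) ∩ Yf = {y} := by
          ext z
          simp only [Finset.mem_inter, Finset.mem_insert, Finset.mem_singleton]
          constructor
          · rintro ⟨rfl | rfl | rfl, hz⟩
            · rfl
            · exact absurd hz (fun h => hdisj z haX h)
            · exact absurd hz (fun h => hdisj z hbX h)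
          · rintro rfl; exact ⟨Or.inl rfl, hyY⟩
        rw [this, Finset.card_singleton]
  · -- injective
    rintro ⟨e, y⟩ he ⟨e', y'⟩ he' heq
    simp only [Finset.coe_sigma, Set.mem_sigma_iff, Finset.mem_coe, Finset.mem_filter]
      at he he'
    have heX := hesub e he.1
    have heX' := hesub e' he'.1
    have hyY : y ∈ Yf := he.2.1
    have hyY' : y' ∈ Yf := he'.2.1
    have hyne : y ∉ sym2F e := fun h => hdisj y (heX y h) hyY
    have hyne' : y' ∉ sym2F e' := fun h => hdisj y' (heX' y' h) hyY'
    simp only at heq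
    have hyy : y = y' := by
      have : y ∈ insert y' (sym2F e') := heq ▸ Finset.mem_insert_self y (sym2F e)
      rcases Finset.mem_insert.mp this with h | h
      · exact h
      · exact absurd (heX' y h) (fun hx => hdisj y hx hyY)
    subst hyy
    have hee : sym2F e = sym2F e' := by
      rw [← Finset.erase_insert hyne, ← Finset.erase_insert hyne', heq]
    exact Sigma.ext (sym2F_injective hee) (heq_of_eq rfl)
  · -- surjective
    intro t ht
    simp only [Finset.coe_filter, Set.mem_setOf_eq, mem_cliqueFinset_iff] at ht
    obtain ⟨hcl, hcard1⟩ := ht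
    obtain ⟨y, hy⟩ := Finset.card_eq_one.mp hcard1
    have hyt : y ∈ t ∧ y ∈ Yf := by
      have : y ∈ t ∩ Yf := hy ▸ Finset.mem_singleton_self y
      exact Finset.mem_inter.mp this
    have htc : t.card = 3 := hcl.card_eq
    have hec : (t.erase y).card = 2 := by
      rw [Finset.card_erase_of_mem hyt.1, htc]
    have hsub : ∀ z ∈ t.erase y, z ∈ Xf := by
      intro z hz
      have hzt := Finset.mem_of_mem_erase hz
      have hzy := Finset.ne_of_mem_erase hz
      rcases hcover z with h | h
      · exact h
      · have : z ∈ t ∩ Yf := Finset.mem_inter.mpr ⟨hzt, h⟩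
        rw [hy, Finset.mem_singleton] at this
        exact absurd this hzy
    obtain ⟨a, b, hab, hs⟩ := Finset.card_eq_two.mp hec
    have haX : a ∈ Xf := hsub a (hs ▸ by simp)
    have hbX : b ∈ Xf := hsub b (hs ▸ by simp)
    have hat : a ∈ t := Finset.mem_of_mem_erase (hs ▸ (by simp : a ∈ ({a,b}:Finset V)))
    have hbt : b ∈ t := Finset.mem_of_mem_erase (hs ▸ (by simp : b ∈ ({a,b}:Finset V)))
    have hya : y ≠ a := fun h => hdisj y (h ▸ haX) hyt.2
    have hyb : y ≠ b := fun h => hdisj y (h ▸ hbX) hyt.2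
    have hHab : H.Adj a b := hcl.isClique hat hbt hab
    have hPab : P.Adj a b := (hxx a b haX hbX).mp hHab
    have hHay : H.Adj a y := hcl.isClique hat hyt.1 (Ne.symm hya)
    have hHby : H.Adj b y := hcl.isClique hbt hyt.1 (Ne.symm hyb)
    refine ⟨⟨s(a, b), y⟩, ?_, ?_⟩
    · simp only [Finset.mem_coe, Finset.mem_sigma, Finset.mem_filter,
        SimpleGraph.mem_edgeFinset, SimpleGraph.mem_edgeSet]
      refine ⟨hPab, hyt.2, ?_⟩
      intro u hu
      rcases Sym2.mem_iff.mp hu with rfl | rfl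
      · exact hHay
      · exact hHby
    · simp only [sym2F_mk]
      rw [← hs, Finset.insert_erase hyt.1]

end Cnt
lemma per_edge {V : Type*} [Fintype V] [DecidableEq V]
    (Hg R : SimpleGraph V) [DecidableRel Hg.Adj]
    (Af Bf Yf : Finset V) (hBsubY : Bf ⊆ Yf)
    (hadj : ∀ a ∈ Af, ∀ y ∈ Yf, (Hg.Adj a y ↔ (y ∉ Bf ∨ R.Adj a y)))
    (hRB : ∀ a ∈ Af, ∀ v, R.Adj a v → v ∈ Bf)
    (e : Sym2 V) (hvert : ∀ z ∈ e, z ∈ Af) :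
    (Yf.filter (fun y => ∀ u ∈ e, Hg.Adj u y)).card
      = (Yf.card - Bf.card) + ({v : V | ∀ u ∈ e, R.Adj u v}).ncard := by
  classical
  induction e using Sym2.ind with
  | _ a b =>
    have haA : a ∈ Af := hvert a (by simp)
    have hbA : b ∈ Af := hvert b (by simp)
    have hS2 : ({v : V | ∀ u ∈ s(a,b), R.Adj u v}).ncard
        = (Finset.univ.filter (fun v => ∀ u ∈ s(a,b), R.Adj u v)).card := by
      rw [Set.ncard_eq_toFinset_card _ (Set.toFinite _)]
      congr 1
      ext v
      simp [Set.Finite.mem_toFinset]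
    rw [hS2]
    have hun : Yf.filter (fun y => ∀ u ∈ s(a,b), Hg.Adj u y)
        = (Yf \ Bf) ∪ Finset.univ.filter (fun v => ∀ u ∈ s(a,b), R.Adj u v) := by
      ext y
      simp only [Finset.mem_filter, Finset.mem_union, Finset.mem_sdiff, Finset.mem_univ,
        true_and]
      constructor
      · rintro ⟨hyY, hall⟩
        by_cases hyB : y ∈ Bf
        · have hra : R.Adj a y := by
            rcases (hadj a haA y hyY).mp (hall a (by simp)) with h | h
            · exact absurd hyB h
            · exact h
          have hrb : R.Adj b y := by
            rcases (hadj b hbA y hyY).mp (hall b (by simp)) with h | h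
            · exact absurd hyB h
            · exact h
          refine Or.inr fun u hu => ?_
          rcases Sym2.mem_iff.mp hu with rfl | rfl
          · exact hra
          · exact hrb
        · exact Or.inl ⟨hyY, hyB⟩
      · rintro (⟨hyY, hyB⟩ | hall)
        · refine ⟨hyY, fun u hu => ?_⟩
          rcases Sym2.mem_iff.mp hu with rfl | rfl
          · exact (hadj _ haA y hyY).mpr (Or.inl hyB)
          · exact (hadj _ hbA y hyY).mpr (Or.inl hyB)
        · have hyB : y ∈ Bf := hRB a haA y (hall a (by simp))
          have hyY : y ∈ Yf := hBsubY hyB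
          refine ⟨hyY, fun u hu => ?_⟩
          rcases Sym2.mem_iff.mp hu with rfl | rfl
          · exact (hadj _ haA y hyY).mpr (Or.inr (hall _ (by simp)))
          · exact (hadj _ hbA y hyY).mpr (Or.inr (hall _ (by simp)))
    rw [hun, Finset.card_union_of_disjoint ?_, Finset.card_sdiff_of_subset hBsubY]
    rw [Finset.disjoint_left]
    intro z hz hz2
    simp only [Finset.mem_sdiff] at hz
    simp only [Finset.mem_filter, Finset.mem_univ, true_and] at hz2
    exact hz.2 (hRB a haA z (hz2 a (by simp)))

lemma mem_pairImage {V : Type*} [DecidableEq V] {Sf Tf : Finset V} {u v : V} :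
    s(u, v) ∈ (Sf ×ˢ Tf).image (fun p => s(p.1, p.2)) ↔
      (u ∈ Sf ∧ v ∈ Tf) ∨ (v ∈ Sf ∧ u ∈ Tf) := by
  simp only [Finset.mem_image, Finset.mem_product, Prod.exists]
  constructor
  · rintro ⟨a, b, ⟨ha, hb⟩, heq⟩
    rcases Sym2.eq_iff.mp heq with ⟨rfl, rfl⟩ | ⟨rfl, rfl⟩
    · exact Or.inl ⟨ha, hb⟩
    · exact Or.inr ⟨ha, hb⟩
  · rintro (⟨hu, hv⟩ | ⟨hv, hu⟩)
    · exact ⟨u, v, ⟨hu, hv⟩, rfl⟩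
    · exact ⟨v, u, ⟨hv, hu⟩, Sym2.eq_swap⟩

set_option maxHeartbeats 1000000 in
/-- Edge and triangle counts of `H_n(P,Q,R)` for a `k`-admissible triple with
`e(P) = e(Q) = f(k-1,k-1)`:
`e(H) = ⌊n²/4⌋ − |A||B| + e(R) + 2f(k-1,k-1)` and
`N(K₃,H) = f(k-1,k-1)(n − |A| − |B|) + N(K₃,P) + N(K₃,Q) + τ_R(P,Q)`
(both stated with the subtracted terms moved to the left-hand side). -/
theorem Hconstr_counts {V : Type*} [Fintype V] [DecidableEq V] (k : ℕ) (hk : 3 ≤ k)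
    (X Y A B : Set V) (P Q R : SimpleGraph V)
    [DecidableRel P.Adj] [DecidableRel Q.Adj]
    (hpart : X ∪ Y = Set.univ) (hdisj : Disjoint X Y)
    (hbal : X.ncard ≤ Y.ncard + 1 ∧ Y.ncard ≤ X.ncard + 1)
    (hAX : A ⊆ X) (hBY : B ⊆ Y)
    (hPA : ∀ u v, P.Adj u v → u ∈ A ∧ v ∈ A)
    (hQB : ∀ u v, Q.Adj u v → u ∈ B ∧ v ∈ B)
    (hPiso : ∀ a ∈ A, ∃ u, P.Adj a u)
    (hQiso : ∀ b ∈ B, ∃ u, Q.Adj b u)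
    (hPnu : nu P ≤ k - 1) (hQnu : nu Q ≤ k - 1)
    (hPdeg : ∀ v, (P.neighborSet v).ncard ≤ k - 1)
    (hQdeg : ∀ v, (Q.neighborSet v).ncard ≤ k - 1)
    (hRbip : ∀ u v, R.Adj u v → (u ∈ A ∧ v ∈ B) ∨ (u ∈ B ∧ v ∈ A))
    (hadmA : ∀ a ∈ A, (P.neighborSet a).ncard + nuOn Q (R.neighborSet a) ≤ k - 1)
    (hadmB : ∀ b ∈ B, (Q.neighborSet b).ncard + nuOn P (R.neighborSet b) ≤ k - 1)
    (heP : P.edgeSet.ncard = fCH k) (heQ : Q.edgeSet.ncard = fCH k)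
    (hn : A.ncard + B.ncard ≤ Fintype.card V) :
    (Hconstr X Y A B P Q R).edgeSet.ncard + A.ncard * B.ncard =
        (Fintype.card V) ^ 2 / 4 + R.edgeSet.ncard + 2 * fCH k ∧
      ((Hconstr X Y A B P Q R).cliqueSet 3).ncard + fCH k * (A.ncard + B.ncard) =
        fCH k * Fintype.card V + ((P.cliqueSet 3).ncard + (Q.cliqueSet 3).ncard) +
          ((∑ e ∈ P.edgeFinset, ({v : V | ∀ u ∈ e, R.Adj u v}).ncard) +
            ∑ e ∈ Q.edgeFinset, ({v : V | ∀ u ∈ e, R.Adj u v}).ncard) := by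
  classical
  set Hg := Hconstr X Y A B P Q R with hHg
  haveI : DecidableRel Hg.Adj := Classical.decRel _
  haveI : DecidableRel R.Adj := Classical.decRel _
  -- basic set facts
  have hXY : ∀ v, v ∈ X → v ∈ Y → False := fun v hx hy => Set.disjoint_left.mp hdisj hx hy
  have hcovS : ∀ v : V, v ∈ X ∨ v ∈ Y := by
    intro v
    have : v ∈ X ∪ Y := hpart ▸ Set.mem_univ v
    exact this
  -- finsets
  set Xf := (Set.toFinite X).toFinset with hXf
  set Yf := (Set.toFinite Y).toFinset with hYf
  set Af := (Set.toFinite A).toFinset with hAf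
  set Bf := (Set.toFinite B).toFinset with hBf
  have hmX : ∀ v, v ∈ Xf ↔ v ∈ X := fun v => Set.Finite.mem_toFinset _
  have hmY : ∀ v, v ∈ Yf ↔ v ∈ Y := fun v => Set.Finite.mem_toFinset _
  have hmA : ∀ v, v ∈ Af ↔ v ∈ A := fun v => Set.Finite.mem_toFinset _
  have hmB : ∀ v, v ∈ Bf ↔ v ∈ B := fun v => Set.Finite.mem_toFinset _
  have hdj : ∀ v, v ∈ Xf → v ∈ Yf → False :=
    fun v hx hy => hXY v ((hmX v).mp hx) ((hmY v).mp hy)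
  have hcov : ∀ v, v ∈ Xf ∨ v ∈ Yf := by
    intro v
    rcases hcovS v with h | h
    · exact Or.inl ((hmX v).mpr h)
    · exact Or.inr ((hmY v).mpr h)
  have hAXf : Af ⊆ Xf := fun v hv => (hmX v).mpr (hAX ((hmA v).mp hv))
  have hBYf : Bf ⊆ Yf := fun v hv => (hmY v).mpr (hBY ((hmB v).mp hv))
  have hncX : X.ncard = Xf.card := Set.ncard_eq_toFinset_card X (Set.toFinite X)
  have hncY : Y.ncard = Yf.card := Set.ncard_eq_toFinset_card Y (Set.toFinite Y)
  have hncA : A.ncard = Af.card := Set.ncard_eq_toFinset_card A (Set.toFinite A)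
  have hncB : B.ncard = Bf.card := Set.ncard_eq_toFinset_card B (Set.toFinite B)
  -- adjacency characterization
  have hH : ∀ u v, Hg.Adj u v ↔ u ≠ v ∧ (P.Adj u v ∨ Q.Adj u v ∨ R.Adj u v ∨
      (u ∈ X ∧ v ∈ Y ∧ ¬(u ∈ A ∧ v ∈ B)) ∨ (v ∈ X ∧ u ∈ Y ∧ ¬(v ∈ A ∧ u ∈ B))) := by
    intro u v
    rw [hHg]
    show (SimpleGraph.fromRel _).Adj u v ↔ _
    rw [SimpleGraph.fromRel_adj]
    constructor
    · rintro ⟨hne, (h | h | h | h) | (h | h | h | h)⟩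
      · exact ⟨hne, Or.inl h⟩
      · exact ⟨hne, Or.inr (Or.inl h)⟩
      · exact ⟨hne, Or.inr (Or.inr (Or.inl h))⟩
      · exact ⟨hne, Or.inr (Or.inr (Or.inr (Or.inl h)))⟩
      · exact ⟨hne, Or.inl (P.adj_symm h)⟩
      · exact ⟨hne, Or.inr (Or.inl (Q.adj_symm h))⟩
      · exact ⟨hne, Or.inr (Or.inr (Or.inl (R.adj_symm h)))⟩
      · exact ⟨hne, Or.inr (Or.inr (Or.inr (Or.inr h)))⟩
    · rintro ⟨hne, h | h | h | h | h⟩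
      · exact ⟨hne, Or.inl (Or.inl h)⟩
      · exact ⟨hne, Or.inl (Or.inr (Or.inl h))⟩
      · exact ⟨hne, Or.inl (Or.inr (Or.inr (Or.inl h)))⟩
      · exact ⟨hne, Or.inl (Or.inr (Or.inr (Or.inr h)))⟩
      · exact ⟨hne, Or.inr (Or.inr (Or.inr (Or.inr h)))⟩
  have hxxS : ∀ u v, u ∈ X → v ∈ X → (Hg.Adj u v ↔ P.Adj u v) := by
    intro u v hu hv
    rw [hH]
    constructor
    · rintro ⟨hne, h | h | h | h | h⟩
      · exact h
      · exact absurd (hBY (hQB u v h).1) (fun hy => hXY u hu hy)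
      · rcases hRbip u v h with ⟨_, hvB⟩ | ⟨huB, _⟩
        · exact absurd (hBY hvB) (fun hy => hXY v hv hy)
        · exact absurd (hBY huB) (fun hy => hXY u hu hy)
      · exact absurd h.2.1 (fun hy => hXY v hv hy)
      · exact absurd h.2.1 (fun hy => hXY u hu hy)
    · intro h; exact ⟨h.ne, Or.inl h⟩
  have hyyS : ∀ u v, u ∈ Y → v ∈ Y → (Hg.Adj u v ↔ Q.Adj u v) := by
    intro u v hu hv
    rw [hH]
    constructor
    · rintro ⟨hne, h | h | h | h | h⟩
      · exact absurd (hAX (hPA u v h).1) (fun hx => hXY u hx hu)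
      · exact h
      · rcases hRbip u v h with ⟨huA, _⟩ | ⟨_, hvA⟩
        · exact absurd (hAX huA) (fun hx => hXY u hx hu)
        · exact absurd (hAX hvA) (fun hx => hXY v hx hv)
      · exact absurd h.1 (fun hx => hXY u hx hu)
      · exact absurd h.1 (fun hx => hXY v hx hv)
    · intro h; exact ⟨h.ne, Or.inr (Or.inl h)⟩
  have hABF : ∀ v, v ∈ A → v ∈ B → False :=
    fun v ha hb => hXY v (hAX ha) (hBY hb)
  -- A-to-Y adjacency
  have hay : ∀ a ∈ A, ∀ y ∈ Y, (Hg.Adj a y ↔ (y ∉ B ∨ R.Adj a y)) := by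
    intro a ha y hy
    rw [hH]
    constructor
    · rintro ⟨hne, h | h | h | h | h⟩
      · exact absurd (hAX (hPA a y h).2) (fun hx => hXY y hx hy)
      · exact absurd (hBY (hQB a y h).1) (fun hb => hXY a (hAX ha) hb)
      · exact Or.inr h
      · exact Or.inl (fun hb => h.2.2 ⟨ha, hb⟩)
      · exact absurd h.1 (fun hx => hXY y hx hy)
    · intro h
      have hne : a ≠ y := fun he => hXY a (hAX ha) (he ▸ hy)
      rcases h with h | h
      · exact ⟨hne, Or.inr (Or.inr (Or.inr (Or.inl ⟨hAX ha, hy, fun hc => h hc.2⟩)))⟩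
      · exact ⟨hne, Or.inr (Or.inr (Or.inl h))⟩
  -- B-to-X adjacency
  have hbx : ∀ b ∈ B, ∀ x ∈ X, (Hg.Adj b x ↔ (x ∉ A ∨ R.Adj b x)) := by
    intro b hb x hx
    rw [hH]
    constructor
    · rintro ⟨hne, h | h | h | h | h⟩
      · exact absurd (hAX (hPA b x h).1) (fun hxb => hXY b hxb (hBY hb))
      · exact absurd (hBY (hQB b x h).2) (fun hy => hXY x hx hy)
      · exact Or.inr h
      · exact absurd h.2.1 (fun hy => hXY x hx hy)
      · exact Or.inl (fun ha => h.2.2 ⟨ha, hb⟩)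
    · intro h
      have hne : b ≠ x := fun he => hXY x hx (he ▸ hBY hb)
      rcases h with h | h
      · exact ⟨hne, Or.inr (Or.inr (Or.inr (Or.inr ⟨hx, hBY hb, fun hc => h hc.1⟩)))⟩
      · exact ⟨hne, Or.inr (Or.inr (Or.inl h))⟩
  -- counting edges
  set XYim : Finset (Sym2 V) := (Xf ×ˢ Yf).image (fun p => s(p.1, p.2)) with hXYim
  set ABim : Finset (Sym2 V) := (Af ×ˢ Bf).image (fun p => s(p.1, p.2)) with hABim
  have hEF : Hg.edgeFinset = (P.edgeFinset ∪ Q.edgeFinset) ∪ ((XYim \ ABim) ∪ R.edgeFinset) := by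
    ext e
    induction e using Sym2.ind with
    | _ u v =>
      simp only [Finset.mem_union, Finset.mem_sdiff, SimpleGraph.mem_edgeFinset,
        SimpleGraph.mem_edgeSet, hXYim, hABim, mem_pairImage, hmX, hmY, hmA, hmB]
      rw [hH]
      constructor
      · rintro ⟨hne, hP | hQ | hR | ⟨hu, hv, hnab⟩ | ⟨hv, hu, hnab⟩⟩
        · exact Or.inl (Or.inl hP)
        · exact Or.inl (Or.inr hQ)
        · exact Or.inr (Or.inr hR)
        · refine Or.inr (Or.inl ⟨Or.inl ⟨hu, hv⟩, ?_⟩)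
          rintro (⟨ha, hb⟩ | ⟨ha, hb⟩)
          · exact hnab ⟨ha, hb⟩
          · exact hXY v (hAX ha) hv
        · refine Or.inr (Or.inl ⟨Or.inr ⟨hv, hu⟩, ?_⟩)
          rintro (⟨ha, hb⟩ | ⟨ha, hb⟩)
          · exact hXY u (hAX ha) hu
          · exact hnab ⟨ha, hb⟩
      · rintro ((hP | hQ) | (⟨hXYm, hnAB⟩ | hR))
        · exact ⟨hP.ne, Or.inl hP⟩
        · exact ⟨hQ.ne, Or.inr (Or.inl hQ)⟩
        · rcases hXYm with ⟨hu, hv⟩ | ⟨hv, hu⟩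
          · refine ⟨fun h => hXY u hu (h ▸ hv), Or.inr (Or.inr (Or.inr (Or.inl
              ⟨hu, hv, fun h => hnAB (Or.inl h)⟩)))⟩
          · refine ⟨fun h => hXY v hv (h ▸ hu), Or.inr (Or.inr (Or.inr (Or.inr
              ⟨hv, hu, fun h => hnAB (Or.inr h)⟩)))⟩
        · exact ⟨hR.ne, Or.inr (Or.inr (Or.inl hR))⟩
  -- disjointness
  have dPQ : Disjoint P.edgeFinset Q.edgeFinset := by
    rw [Finset.disjoint_left]
    intro e
    induction e using Sym2.ind with
    | _ u v =>
      intro he he'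
      rw [SimpleGraph.mem_edgeFinset, SimpleGraph.mem_edgeSet] at he he'
      exact hXY u (hAX (hPA u v he).1) (hBY (hQB u v he').1)
  have hRsubAB : R.edgeFinset ⊆ ABim := by
    intro e
    induction e using Sym2.ind with
    | _ u v =>
      intro he
      rw [SimpleGraph.mem_edgeFinset, SimpleGraph.mem_edgeSet] at he
      rw [hABim, mem_pairImage]
      rcases hRbip u v he with ⟨ha, hb⟩ | ⟨hb, ha⟩
      · exact Or.inl ⟨(hmA u).mpr ha, (hmB v).mpr hb⟩
      · exact Or.inr ⟨(hmA v).mpr ha, (hmB u).mpr hb⟩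
  have dPQC : Disjoint (P.edgeFinset ∪ Q.edgeFinset) ((XYim \ ABim) ∪ R.edgeFinset) := by
    rw [Finset.disjoint_left]
    intro e
    induction e using Sym2.ind with
    | _ u v =>
      intro he he'
      have hXuv : (u ∈ X ∧ v ∈ X) ∨ (u ∈ Y ∧ v ∈ Y) := by
        rcases Finset.mem_union.mp he with h | h
        · rw [SimpleGraph.mem_edgeFinset, SimpleGraph.mem_edgeSet] at h
          exact Or.inl ⟨hAX (hPA u v h).1, hAX (hPA u v h).2⟩
        · rw [SimpleGraph.mem_edgeFinset, SimpleGraph.mem_edgeSet] at h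
          exact Or.inr ⟨hBY (hQB u v h).1, hBY (hQB u v h).2⟩
      have hcr : (u ∈ X ∧ v ∈ Y) ∨ (v ∈ X ∧ u ∈ Y) := by
        rcases Finset.mem_union.mp he' with h | h
        · have := (Finset.mem_sdiff.mp h).1
          rw [hXYim, mem_pairImage] at this
          rcases this with ⟨h1, h2⟩ | ⟨h1, h2⟩
          · exact Or.inl ⟨(hmX u).mp h1, (hmY v).mp h2⟩
          · exact Or.inr ⟨(hmX v).mp h1, (hmY u).mp h2⟩
        · have := hRsubAB h
          rw [hABim, mem_pairImage] at this
          rcases this with ⟨h1, h2⟩ | ⟨h1, h2⟩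
          · exact Or.inl ⟨hAX ((hmA u).mp h1), hBY ((hmB v).mp h2)⟩
          · exact Or.inr ⟨hAX ((hmA v).mp h1), hBY ((hmB u).mp h2)⟩
      rcases hXuv with ⟨h1, h2⟩ | ⟨h1, h2⟩ <;> rcases hcr with ⟨h3, h4⟩ | ⟨h3, h4⟩
      · exact hXY v h2 h4
      · exact hXY u h1 h4
      · exact hXY u h3 h1
      · exact hXY v h3 h2
  have dCR : Disjoint (XYim \ ABim) R.edgeFinset := by
    rw [Finset.disjoint_left]
    intro e he he'
    exact (Finset.mem_sdiff.mp he).2 (hRsubAB he')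
  have hABsubXY : ABim ⊆ XYim := by
    intro e
    induction e using Sym2.ind with
    | _ u v =>
      intro he
      rw [hABim, mem_pairImage] at he
      rw [hXYim, mem_pairImage]
      rcases he with ⟨h1, h2⟩ | ⟨h1, h2⟩
      · exact Or.inl ⟨hAXf h1, hBYf h2⟩
      · exact Or.inr ⟨hAXf h1, hBYf h2⟩
  have hXYcard : XYim.card = Xf.card * Yf.card := by
    rw [hXYim, Finset.card_image_of_injOn, Finset.card_product]
    rintro ⟨x, y⟩ hxy ⟨x', y'⟩ hxy' heq
    simp only [Finset.coe_product, Set.mem_prod, Finset.mem_coe] at hxy hxy'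
    rcases Sym2.eq_iff.mp heq with ⟨rfl, rfl⟩ | ⟨rfl, rfl⟩
    · rfl
    · exact (hdj x hxy.1 hxy'.2).elim
  have hABcard : ABim.card = Af.card * Bf.card := by
    rw [hABim, Finset.card_image_of_injOn, Finset.card_product]
    rintro ⟨x, y⟩ hxy ⟨x', y'⟩ hxy' heq
    simp only [Finset.coe_product, Set.mem_prod, Finset.mem_coe] at hxy hxy'
    rcases Sym2.eq_iff.mp heq with ⟨rfl, rfl⟩ | ⟨rfl, rfl⟩
    · rfl
    · exact (hdj x (hAXf hxy.1) (hBYf hxy'.2)).elim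
  have hcardE : Hg.edgeFinset.card = P.edgeFinset.card + Q.edgeFinset.card
      + ((Xf.card * Yf.card - Af.card * Bf.card) + R.edgeFinset.card) := by
    rw [hEF, Finset.card_union_of_disjoint dPQC, Finset.card_union_of_disjoint dPQ,
      Finset.card_union_of_disjoint dCR, Finset.card_sdiff_of_subset hABsubXY, hXYcard, hABcard]
  -- card of V
  have hunivXY : Xf ∪ Yf = Finset.univ := by
    ext v
    simp only [Finset.mem_union, Finset.mem_univ, iff_true]
    exact hcov v
  have hcardV : Fintype.card V = Xf.card + Yf.card := by
    rw [← Finset.card_univ, ← hunivXY, Finset.card_union_of_disjoint]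
    rw [Finset.disjoint_left]
    exact fun a ha hb => hdj a ha hb
  have hxymul : Xf.card * Yf.card = (Fintype.card V) ^ 2 / 4 := by
    rw [hcardV]
    exact balanced_mul _ _ (by rw [← hncX, ← hncY]; exact hbal.1)
      (by rw [← hncX, ← hncY]; exact hbal.2)
  have hABle : Af.card * Bf.card ≤ Xf.card * Yf.card :=
    Nat.mul_le_mul (Finset.card_le_card hAXf) (Finset.card_le_card hBYf)
  -- edge counts in ncard form
  have hEnc : Hg.edgeSet.ncard = Hg.edgeFinset.card := by
    rw [← SimpleGraph.coe_edgeFinset, Set.ncard_coe_finset]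
  have hPnc : P.edgeFinset.card = fCH k := by
    rw [← heP, ← SimpleGraph.coe_edgeFinset, Set.ncard_coe_finset]
  have hQnc : Q.edgeFinset.card = fCH k := by
    rw [← heQ, ← SimpleGraph.coe_edgeFinset, Set.ncard_coe_finset]
  have hRnc : R.edgeSet.ncard = R.edgeFinset.card := by
    rw [← SimpleGraph.coe_edgeFinset, Set.ncard_coe_finset]
  constructor
  · -- edge count
    rw [hEnc, hcardE, hPnc, hQnc, hncA, hncB, hRnc, ← hxymul]
    generalize Xf.card * Yf.card = m at hABle ⊢
    generalize Af.card * Bf.card = l at hABle ⊢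
    omega
  · -- triangle count
    have hPXf : ∀ u v, P.Adj u v → u ∈ Xf ∧ v ∈ Xf := fun u v h =>
      ⟨(hmX u).mpr (hAX (hPA u v h).1), (hmX v).mpr (hAX (hPA u v h).2)⟩
    have hQYf : ∀ u v, Q.Adj u v → u ∈ Yf ∧ v ∈ Yf := fun u v h =>
      ⟨(hmY u).mpr (hBY (hQB u v h).1), (hmY v).mpr (hBY (hQB u v h).2)⟩
    have hxxf : ∀ u v, u ∈ Xf → v ∈ Xf → (Hg.Adj u v ↔ P.Adj u v) :=
      fun u v hu hv => hxxS u v ((hmX u).mp hu) ((hmX v).mp hv)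
    have hyyf : ∀ u v, u ∈ Yf → v ∈ Yf → (Hg.Adj u v ↔ Q.Adj u v) :=
      fun u v hu hv => hyyS u v ((hmY u).mp hu) ((hmY v).mp hv)
    have hdj' : ∀ v, v ∈ Yf → v ∈ Xf → False := fun v hy hx => hdj v hx hy
    have hcov' : ∀ v, v ∈ Yf ∨ v ∈ Xf := fun v => (hcov v).symm
    have hsplit : ∀ t ∈ Hg.cliqueFinset 3, (t ∩ Xf).card + (t ∩ Yf).card = 3 := by
      intro t ht
      have htc : t.card = 3 := (SimpleGraph.mem_cliqueFinset_iff.mp ht).card_eq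
      have hun : (t ∩ Xf) ∪ (t ∩ Yf) = t := by
        ext z
        simp only [Finset.mem_union, Finset.mem_inter]
        constructor
        · rintro (⟨h, _⟩ | ⟨h, _⟩) <;> exact h
        · intro hz
          rcases hcov z with h | h
          · exact Or.inl ⟨hz, h⟩
          · exact Or.inr ⟨hz, h⟩
      have hd : Disjoint (t ∩ Xf) (t ∩ Yf) := by
        rw [Finset.disjoint_left]
        intro z hz hz'
        exact hdj z (Finset.mem_inter.mp hz).2 (Finset.mem_inter.mp hz').2
      rw [← Finset.card_union_of_disjoint hd, hun, htc]
    have hfib := Finset.card_eq_sum_card_fiberwise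
      (f := fun t => (t ∩ Yf).card) (s := Hg.cliqueFinset 3) (t := Finset.range 4)
      (by
        intro t ht
        have := hsplit t ht
        simp only [Finset.mem_coe, Finset.mem_range]
        omega)
    rw [Finset.sum_range_succ, Finset.sum_range_succ, Finset.sum_range_succ,
      Finset.sum_range_one] at hfib
    -- fiber 0
    have hf0 : ((Hg.cliqueFinset 3).filter (fun t => (t ∩ Yf).card = 0)).card
        = (P.cliqueFinset 3).card := pure_count Hg P Xf Yf hdj hcov hPXf hxxf
    -- fiber 3 = pure Q
    have hf3eq : (Hg.cliqueFinset 3).filter (fun t => (t ∩ Yf).card = 3)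
        = (Hg.cliqueFinset 3).filter (fun t => (t ∩ Xf).card = 0) := by
      apply Finset.filter_congr
      intro t ht
      have := hsplit t ht
      constructor <;> intro h <;> omega
    have hf3 : ((Hg.cliqueFinset 3).filter (fun t => (t ∩ Yf).card = 3)).card
        = (Q.cliqueFinset 3).card := by
      rw [hf3eq]
      exact pure_count Hg Q Yf Xf hdj' hcov' hQYf hyyf
    -- fiber 1
    have hf1 : ((Hg.cliqueFinset 3).filter (fun t => (t ∩ Yf).card = 1)).card
        = ∑ e ∈ P.edgeFinset, (Yf.filter (fun y => ∀ u ∈ e, Hg.Adj u y)).card :=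
      mixed_count Hg P Xf Yf hdj hcov hPXf hxxf
    -- fiber 2
    have hf2eq : (Hg.cliqueFinset 3).filter (fun t => (t ∩ Yf).card = 2)
        = (Hg.cliqueFinset 3).filter (fun t => (t ∩ Xf).card = 1) := by
      apply Finset.filter_congr
      intro t ht
      have := hsplit t ht
      constructor <;> intro h <;> omega
    have hf2 : ((Hg.cliqueFinset 3).filter (fun t => (t ∩ Yf).card = 2)).card
        = ∑ e ∈ Q.edgeFinset, (Xf.filter (fun x => ∀ u ∈ e, Hg.Adj u x)).card := by
      rw [hf2eq]
      exact mixed_count Hg Q Yf Xf hdj' hcov' hQYf hyyf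
    -- evaluate per-edge sums
    have hPvert : ∀ e ∈ P.edgeFinset, ∀ z ∈ e, z ∈ Af := by
      intro e
      induction e using Sym2.ind with
      | _ u v =>
        intro he z hz
        rw [SimpleGraph.mem_edgeFinset, SimpleGraph.mem_edgeSet] at he
        rcases Sym2.mem_iff.mp hz with rfl | rfl
        · exact (hmA z).mpr (hPA _ _ he).1
        · exact (hmA z).mpr (hPA _ _ he).2
    have hQvert : ∀ e ∈ Q.edgeFinset, ∀ z ∈ e, z ∈ Bf := by
      intro e
      induction e using Sym2.ind with
      | _ u v =>
        intro he z hz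
        rw [SimpleGraph.mem_edgeFinset, SimpleGraph.mem_edgeSet] at he
        rcases Sym2.mem_iff.mp hz with rfl | rfl
        · exact (hmB z).mpr (hQB _ _ he).1
        · exact (hmB z).mpr (hQB _ _ he).2
    have hayf : ∀ a ∈ Af, ∀ y ∈ Yf, (Hg.Adj a y ↔ (y ∉ Bf ∨ R.Adj a y)) := by
      intro a ha y hy
      rw [hay a ((hmA a).mp ha) y ((hmY y).mp hy)]
      constructor
      · rintro (h | h)
        · exact Or.inl (fun hb => h ((hmB y).mp hb))
        · exact Or.inr h
      · rintro (h | h)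
        · exact Or.inl (fun hb => h ((hmB y).mpr hb))
        · exact Or.inr h
    have hbxf : ∀ b ∈ Bf, ∀ x ∈ Xf, (Hg.Adj b x ↔ (x ∉ Af ∨ R.Adj b x)) := by
      intro b hb x hx
      rw [hbx b ((hmB b).mp hb) x ((hmX x).mp hx)]
      constructor
      · rintro (h | h)
        · exact Or.inl (fun ha => h ((hmA x).mp ha))
        · exact Or.inr h
      · rintro (h | h)
        · exact Or.inl (fun ha => h ((hmA x).mpr ha))
        · exact Or.inr h
    have hRBf : ∀ a ∈ Af, ∀ v, R.Adj a v → v ∈ Bf := by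
      intro a ha v hr
      rcases hRbip a v hr with ⟨_, hb⟩ | ⟨hb, _⟩
      · exact (hmB v).mpr hb
      · exact absurd (hBY hb) (fun hy => hXY a (hAX ((hmA a).mp ha)) hy)
    have hRAf : ∀ b ∈ Bf, ∀ v, R.Adj b v → v ∈ Af := by
      intro b hb v hr
      rcases hRbip b v hr with ⟨ha, _⟩ | ⟨_, ha⟩
      · exact absurd (hAX ha) (fun hx => hXY b hx (hBY ((hmB b).mp hb)))
      · exact (hmA v).mpr ha
    have hsumP : ∑ e ∈ P.edgeFinset, (Yf.filter (fun y => ∀ u ∈ e, Hg.Adj u y)).card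
        = fCH k * (Yf.card - Bf.card)
          + ∑ e ∈ P.edgeFinset, ({v : V | ∀ u ∈ e, R.Adj u v}).ncard := by
      rw [Finset.sum_congr rfl (fun e he =>
        per_edge Hg R Af Bf Yf hBYf hayf hRBf e (hPvert e he))]
      rw [Finset.sum_add_distrib, Finset.sum_const, smul_eq_mul, hPnc]
    have hsumQ : ∑ e ∈ Q.edgeFinset, (Xf.filter (fun x => ∀ u ∈ e, Hg.Adj u x)).card
        = fCH k * (Xf.card - Af.card)
          + ∑ e ∈ Q.edgeFinset, ({v : V | ∀ u ∈ e, R.Adj u v}).ncard := by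
      rw [Finset.sum_congr rfl (fun e he =>
        per_edge Hg R Bf Af Xf hAXf hbxf hRAf e (hQvert e he))]
      rw [Finset.sum_add_distrib, Finset.sum_const, smul_eq_mul, hQnc]
    -- assemble
    have hclnc : (Hg.cliqueSet 3).ncard = (Hg.cliqueFinset 3).card := by
      rw [← SimpleGraph.coe_cliqueFinset, Set.ncard_coe_finset]
    have hPcl : (P.cliqueSet 3).ncard = (P.cliqueFinset 3).card := by
      rw [← SimpleGraph.coe_cliqueFinset, Set.ncard_coe_finset]
    have hQcl : (Q.cliqueSet 3).ncard = (Q.cliqueFinset 3).card := by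
      rw [← SimpleGraph.coe_cliqueFinset, Set.ncard_coe_finset]
    rw [hclnc, hPcl, hQcl, hncA, hncB, hcardV, hfib, hf0, hf1, hf2, hf3, hsumP, hsumQ]
    have e1 : fCH k * (Yf.card - Bf.card) + fCH k * Bf.card = fCH k * Yf.card := by
      rw [← Nat.mul_add]
      congr 1
      have := Finset.card_le_card hBYf
      omega
    have e2 : fCH k * (Xf.card - Af.card) + fCH k * Af.card = fCH k * Xf.card := by
      rw [← Nat.mul_add]
      congr 1
      have := Finset.card_le_card hAXf
      omega
    have e3 : fCH k * (Af.card + Bf.card) = fCH k * Af.card + fCH k * Bf.card :=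
      Nat.mul_add _ _ _
    have e4 : fCH k * (Xf.card + Yf.card) = fCH k * Xf.card + fCH k * Yf.card :=
      Nat.mul_add _ _ _
    -- linear arithmetic over products as atoms
    generalize fCH k * (Yf.card - Bf.card) = u1 at *
    generalize fCH k * Bf.card = u2 at *
    generalize fCH k * Yf.card = u3 at *
    generalize fCH k * (Xf.card - Af.card) = u4 at *
    generalize fCH k * Af.card = u5 at *
    generalize fCH k * Xf.card = u6 at *
    generalize fCH k * (Af.card + Bf.card) = u7 at *
    generalize fCH k * (Xf.card + Yf.card) = u8 at *
    omega
end

section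
/- Let k ≥ 1 and let x_1, ..., x_k be k distinct neighbors of a vertex x inside a set X, in a graph G with partition V(G) = X ∪ Y. Suppose each pair {x, x_i} has at least |Y| − β common neighbors in Y, and |Y| > kβ + k. Then there exist distinct vertices y_1, ..., y_k ∈ Y with y_i adjacent to both x and x_i for each i, and hence G contains a copy of F_k centered at x. -/
open SimpleGraph

/-- Auxiliary map used to build the `F_k` homomorphism. -/
def greedyMap {V : Type*} {k : ℕ} (x : V) (xs ys : Fin k → V) :
    Option (Fin k × Fin 2) → V
  | none => x
  | some (i, ⟨0, _⟩) => xs i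
  | some (i, ⟨_+1, _⟩) => ys i

/-- Greedy construction of an `F_k` centered at `x`: if `x₁,…,x_k` are distinct neighbors
of `x` inside `X`, each pair `{x,xᵢ}` has at least `|Y| − β` common neighbors in `Y`, and
`|Y| > kβ + k`, then there are distinct `y₁,…,y_k ∈ Y` completing `k` triangles, so `G`
contains a copy of `F_k` centered at `x`. -/
theorem greedy_center {V : Type*} [Fintype V] (k β : ℕ) (hk : 1 ≤ k)
    (G : SimpleGraph V) (X Y : Set V)
    (hpart : X ∪ Y = Set.univ) (hdisj : Disjoint X Y)
    (x : V) (hx : x ∈ X) (xs : Fin k → V) (hinj : Function.Injective xs)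
    (hxs : ∀ i, xs i ∈ X ∧ G.Adj x (xs i))
    (hcn : ∀ i, Y.ncard - β ≤ ((G.neighborSet x ∩ G.neighborSet (xs i)) ∩ Y).ncard)
    (hY : k * β + k < Y.ncard) :
    (∃ ys : Fin k → V, Function.Injective ys ∧
        ∀ i, ys i ∈ Y ∧ G.Adj x (ys i) ∧ G.Adj (xs i) (ys i)) ∧
      ∃ f : friendshipGraph k →g G, Function.Injective ⇑f ∧ f none = x := by
  classical
  set N : Fin k → Set V := fun i => (G.neighborSet x ∩ G.neighborSet (xs i)) ∩ Y with hN
  have hkcard : ∀ i, k ≤ (N i).ncard := by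
    intro i
    have h1 : Y.ncard - β ≤ (N i).ncard := hcn i
    have h2 : β ≤ k * β := Nat.le_mul_of_pos_left β hk
    omega
  have hHall : ∀ s : Finset (Fin k), s.card ≤ (s.biUnion (fun i => (N i).toFinset)).card := by
    intro s
    rcases s.eq_empty_or_nonempty with rfl | ⟨i, hi⟩
    · simp
    · calc s.card ≤ Finset.univ.card := Finset.card_le_card (Finset.subset_univ s)
        _ = k := by simp
        _ ≤ ((N i).toFinset).card := by
            rw [Set.toFinset_card, ← Nat.card_eq_fintype_card, Nat.card_coe_set_eq]
            exact hkcard i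
        _ ≤ _ := Finset.card_le_card (Finset.subset_biUnion_of_mem (fun i => (N i).toFinset) hi)
  obtain ⟨ys, hysinj, hys⟩ :=
    (Finset.all_card_le_biUnion_card_iff_exists_injective (fun i => (N i).toFinset)).mp hHall
  have hysN : ∀ i, ys i ∈ N i := fun i => Set.mem_toFinset.mp (hys i)
  have hysY : ∀ i, ys i ∈ Y := fun i => (hysN i).2
  have hadjx : ∀ i, G.Adj x (ys i) := fun i => (hysN i).1.1
  have hadjxs : ∀ i, G.Adj (xs i) (ys i) := fun i => (hysN i).1.2
  have hXY : ∀ a b : V, a ∈ X → b ∈ Y → a ≠ b := by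
    intro a b ha hb h; subst h; exact Set.disjoint_left.mp hdisj ha hb
  refine ⟨⟨ys, hysinj, fun i => ⟨hysY i, hadjx i, hadjxs i⟩⟩, ?_⟩
  set g : Option (Fin k × Fin 2) → V := greedyMap x xs ys with hg
  have hmap : ∀ {a b}, (friendshipGraph k).Adj a b → G.Adj (g a) (g b) := by
    intro a b hab
    rw [friendshipGraph, fromRel_adj] at hab
    obtain ⟨hne, h | h⟩ := hab
    · rcases h with h | h | ⟨i, h1, h2⟩
      · subst h
        rcases b with _ | ⟨i, ⟨jv, hj⟩⟩
        · exact absurd rfl hne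
        · interval_cases jv
          · exact (hxs i).2
          · exact hadjx i
      · subst h
        rcases a with _ | ⟨i, ⟨jv, hj⟩⟩
        · exact absurd rfl hne
        · interval_cases jv
          · exact ((hxs i).2).symm
          · exact (hadjx i).symm
      · subst h1; subst h2
        exact hadjxs i
    · rcases h with h | h | ⟨i, h1, h2⟩
      · subst h
        rcases a with _ | ⟨i, ⟨jv, hj⟩⟩
        · exact absurd rfl hne
        · interval_cases jv
          · exact ((hxs i).2).symm
          · exact (hadjx i).symm
      · subst h
        rcases b with _ | ⟨i, ⟨jv, hj⟩⟩
        · exact absurd rfl (Ne.symm hne)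
        · interval_cases jv
          · exact (hxs i).2
          · exact hadjx i
      · subst h1; subst h2
        exact (hadjxs i).symm
  have hginj : Function.Injective g := by
    rintro (_ | ⟨i, ⟨jv, hj⟩⟩) (_ | ⟨i', ⟨jv', hj'⟩⟩) hab
    · rfl
    · exfalso
      interval_cases jv'
      · exact ((hxs i').2).ne hab
      · exact (hadjx i').ne hab
    · exfalso
      interval_cases jv
      · exact ((hxs i).2).ne hab.symm
      · exact (hadjx i).ne hab.symm
    · interval_cases jv <;> interval_cases jv'
      · have : i = i' := hinj hab
        subst this; rfl
      · exact absurd hab (hXY _ _ (hxs i).1 (hysY i'))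
      · exact absurd hab.symm (hXY _ _ (hxs i').1 (hysY i))
      · have : i = i' := hysinj hab
        subst this; rfl
  exact ⟨⟨g, hmap⟩, hginj, rfl⟩
end
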